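/- Let g be of type A_n with adapted sequence ι and let k ∈ I satisfy neither ι^{(k)} > ι^{(k+1)} (when k < n) nor ι^{(k)} > ι^{(k-1)} (when k > 1). Define λ^{(k)} = −x_{1,k} + ⟨λ, h_k⟩. Then for all (l, j) ∈ ℤ_{≥1} × I, Ŝ_{l,j} λ^{(k)} = 0 if (l,j) = (1,k) and Ŝ_{l,j} λ^{(k)} = λ^{(k)} otherwise; consequently Ξ_{ι,k}[λ] = {0, λ^{(k)}}. -/

import Mathlib

/-! Combinatorics of an adapted sequence `ι` for a classical Lie algebra, and the
column-tableau linear forms of Kanakubo–Nakashima in re-indexed coordinates `x_{m,j}`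
(the coordinate for the `m`-th occurrence of the index `j` in `ι`). -/

noncomputable section

/-- First position `m ≥ 1` with `ι m ∈ {i, j}`. -/
def firstBoth (ι : ℕ → ℕ) (i j : ℕ) : ℕ := sInf {m | 1 ≤ m ∧ (ι m = i ∨ ι m = j)}

/-- `p_{i,j} = 1` if `i` occurs before `j` in `ι`, and `0` otherwise. -/
def pOf (ι : ℕ → ℕ) (i j : ℕ) : ℕ := if ι (firstBoth ι i j) = i then 1 else 0

/-- `ι⁽ⁱ⁾`, the first position of `ι` at which `i` occurs. -/
def firstOcc (ι : ℕ → ℕ) (i : ℕ) : ℕ := sInf {m | 1 ≤ m ∧ ι m = i}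

/-- `P(k) = p_{2,1} + p_{3,2} + ⋯ + p_{k,k-1}` (so `P 0 = P 1 = 0`). -/
def Pof (ι : ℕ → ℕ) (k : ℕ) : ℕ := ∑ i ∈ Finset.Icc 2 k, pOf ι i (i - 1)

/-- The condition that every index `1,…,n` occurs infinitely often in `ι` and
consecutive entries of `ι` differ. -/
def SeqCond (n : ℕ) (ι : ℕ → ℕ) : Prop :=
  (∀ m, 1 ≤ m → 1 ≤ ι m ∧ ι m ≤ n) ∧
  (∀ m, 1 ≤ m → ι m ≠ ι (m + 1)) ∧
  (∀ i, 1 ≤ i → i ≤ n → ∀ N : ℕ, ∃ m, N < m ∧ ι m = i)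

/-- `ι` is adapted to the type `A_n` Cartan matrix: for adjacent indices `i, j`, any two
consecutive members of the subsequence of `ι` consisting of `i`'s and `j`'s differ. -/
def AdaptedA (n : ℕ) (ι : ℕ → ℕ) : Prop :=
  ∀ i j : ℕ, 1 ≤ i → i ≤ n → 1 ≤ j → j ≤ n → (i = j + 1 ∨ j = i + 1) →
    ∀ m m' : ℕ, 1 ≤ m → m < m' → (ι m = i ∨ ι m = j) → (ι m' = i ∨ ι m' = j) →
      (∀ r, m < r → r < m' → ι r ≠ i ∧ ι r ≠ j) → ι m ≠ ι m'

/-- Linear forms on `ℚ^∞`, presented by their coefficients in the re-indexed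
coordinates `x_{m,j}`. -/
abbrev LinF : Type := ℤ × ℕ → ℚ

/-- The coordinate functional `x_{m,j}` (zero when `m ≤ 0`, `j = 0` or `j > n`). -/
def XT (n : ℕ) (m : ℤ) (j : ℕ) : LinF :=
  fun q => if q = (m, j) ∧ 1 ≤ m ∧ 1 ≤ j ∧ j ≤ n then 1 else 0

/-- The box `⌈j⌉^A_s = x_{s+P(j),j} − x_{s+P(j−1)+1,j−1}` of type `A_n`. -/
def boxA (n : ℕ) (ι : ℕ → ℕ) (j : ℕ) (s : ℤ) : LinF :=
  XT n (s + (Pof ι j : ℤ)) j - XT n (s + (Pof ι (j - 1) : ℤ) + 1) (j - 1)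

/-- The column tableau `[j₁,…,j_k]^A_s = Σ_{i=1}^k ⌈j_i⌉^A_{s+k−i}` (here `j` is
`0`-indexed: `j ⟨0⟩ = j₁, …`). -/
def tabA (n : ℕ) (ι : ℕ → ℕ) {k : ℕ} (j : Fin k → ℕ) (s : ℤ) : LinF :=
  ∑ i : Fin k, boxA n ι (j i) (s + (k : ℤ) - 1 - ((i : ℕ) : ℤ))

/-- The Nakashima–Zelevinsky form `β_{m,j}` in re-indexed coordinates, for `ι` adapted
to a type `A` Cartan matrix:
`β_{m,j} = x_{m,j} + x_{m+1,j} − x_{m+p_{j−1,j},j−1} − x_{m+p_{j+1,j},j+1}`. -/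
def betaA (n : ℕ) (ι : ℕ → ℕ) (m : ℤ) (j : ℕ) : LinF :=
  XT n m j + XT n (m + 1) j - XT n (m + (pOf ι (j - 1) j : ℤ)) (j - 1)
    - XT n (m + (pOf ι (j + 1) j : ℤ)) (j + 1)

/-- Affine-linear forms: a constant term together with a linear form. -/
abbrev AffF : Type := ℚ × LinF

/-- The form `β⁽⁻⁾_{m,j}` in re-indexed coordinates: `β_{m−1,j}` when `m ≥ 2`, and the
`λ`-dependent form with constant term `−⟨h_j, λ⟩` when `m = 1`. -/
def betaMA (n : ℕ) (ι : ℕ → ℕ) (lam : ℕ → ℤ) (m : ℤ) (j : ℕ) : AffF :=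
  ((if m = 1 then -(lam j : ℚ) else 0), betaA n ι (m - 1) j)

/-- The operator `Ŝ_{m,j}` of the polyhedral realization of `B(λ)` in re-indexed
coordinates. -/
def ShatA (n : ℕ) (ι : ℕ → ℕ) (lam : ℕ → ℤ) (m : ℤ) (j : ℕ) (φ : AffF) : AffF :=
  if 0 < φ.2 (m, j) then φ - φ.2 (m, j) • (((0 : ℚ), betaA n ι m j) : AffF)
  else φ - φ.2 (m, j) • betaMA n ι lam m j

end

/-- The Cartan matrix pairing `⟨h_i, α_j⟩` of type `A` (valid on indices `1,…,n`). -/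
def CartanA (i j : ℕ) : ℤ := if i = j then 2 else if i = j + 1 ∨ j = i + 1 then -1 else 0

/-- Affine-linear functions on `ℚ^∞` in absolute coordinates `x_m` (`m ≥ 1`). -/
abbrev AffAbs : Type := ℚ × (ℕ → ℚ)

/-- `β_k⁽⁺⁾`. -/
def betaPosAbs (C : ℕ → ℕ → ℤ) (ι kp : ℕ → ℕ) (k : ℕ) : AffAbs :=
  (0, fun j =>
    (if j = k then 1 else 0) + (if k < j ∧ j < kp k then (C (ι k) (ι j) : ℚ) else 0) +
      (if j = kp k then 1 else 0))

/-- `β_k⁽⁻⁾` (with constant term `−⟨h_{i_k}, λ⟩` when `k⁽⁻⁾ = 0`). -/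
def betaNegAbs (C : ℕ → ℕ → ℤ) (ι km : ℕ → ℕ) (lam : ℕ → ℤ) (k : ℕ) : AffAbs :=
  if km k = 0 then
    (-(lam (ι k) : ℚ),
      fun j => (if 1 ≤ j ∧ j < k then (C (ι k) (ι j) : ℚ) else 0) + (if j = k then 1 else 0))
  else
    (0, fun j =>
      (if j = km k then 1 else 0) + (if km k < j ∧ j < k then (C (ι k) (ι j) : ℚ) else 0) +
        (if j = k then 1 else 0))

/-- The operator `Ŝ_k` in absolute coordinates. -/
def ShatAbs (C : ℕ → ℕ → ℤ) (ι kp km : ℕ → ℕ) (lam : ℕ → ℤ) (k : ℕ) (φ : AffAbs) : AffAbs :=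
  if 0 < φ.2 k then φ - φ.2 k • betaPosAbs C ι kp k
  else φ - φ.2 k • betaNegAbs C ι km lam k

def IsKp (ι kp : ℕ → ℕ) : Prop :=
  ∀ k, 1 ≤ k → k < kp k ∧ ι (kp k) = ι k ∧ ∀ l, k < l → ι l = ι k → kp k ≤ l

def IsKm (ι km : ℕ → ℕ) : Prop :=
  ∀ k, 1 ≤ k →
    (km k = 0 ∧ ∀ l, 1 ≤ l → l < k → ι l ≠ ι k) ∨
    (1 ≤ km k ∧ km k < k ∧ ι (km k) = ι k ∧ ∀ l, 1 ≤ l → l < k → ι l = ι k → l ≤ km k)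

/-- The generator `λ⁽ᵏ⁾ = ⟨h_k,λ⟩ − Σ_{1≤j<ι⁽ᵏ⁾} ⟨h_k, α_{i_j}⟩ x_j − x_{ι⁽ᵏ⁾}`
(which equals `−x_{1,k} + ⟨λ,h_k⟩` under the hypotheses below). -/
noncomputable def lamGenA (ι : ℕ → ℕ) (lam : ℕ → ℤ) (k : ℕ) : AffAbs :=
  ((lam k : ℚ), fun j =>
    -((if 1 ≤ j ∧ j < firstOcc ι k then (CartanA k (ι j) : ℚ) else 0) +
      (if j = firstOcc ι k then 1 else 0)))

/-- Type `A_n`, `ι` adapted, `k ∈ I` such that neither `k < n ∧ ι⁽ᵏ⁾ > ι⁽ᵏ⁺¹⁾` nor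
`k > 1 ∧ ι⁽ᵏ⁾ > ι⁽ᵏ⁻¹⁾` holds.  Then `Ŝ_{l,j} λ⁽ᵏ⁾ = 0` if `(l,j) = (1,k)` (i.e. the
operator at the position `ι⁽ᵏ⁾` of the first occurrence of `k`), and
`Ŝ_{l,j} λ⁽ᵏ⁾ = λ⁽ᵏ⁾` otherwise; consequently `Ξ_{ι,k}[λ] = {0, λ⁽ᵏ⁾}`. -/
theorem XiK_two_elements (n : ℕ) (ι kp km : ℕ → ℕ) (lam : ℕ → ℤ)
    (hseq : SeqCond n ι) (had : AdaptedA n ι)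
    (hkp : IsKp ι kp) (hkm : IsKm ι km) (hdom : ∀ i, 0 ≤ lam i)
    (k : ℕ) (hk1 : 1 ≤ k) (hkn : k ≤ n)
    (hc1 : ¬(k < n ∧ firstOcc ι (k + 1) < firstOcc ι k))
    (hc2 : ¬(1 < k ∧ firstOcc ι (k - 1) < firstOcc ι k)) :
    (∀ m, 1 ≤ m →
      ShatAbs CartanA ι kp km lam m (lamGenA ι lam k) =
        if m = firstOcc ι k then (((0 : ℚ), (0 : ℕ → ℚ)) : AffAbs) else lamGenA ι lam k) ∧
    {ψ : AffAbs | ∃ L : List ℕ, (∀ m ∈ L, 1 ≤ m) ∧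
        ψ = L.foldr (ShatAbs CartanA ι kp km lam) (lamGenA ι lam k)} =
      {(((0 : ℚ), (0 : ℕ → ℚ)) : AffAbs), lamGenA ι lam k} := by
  set p := firstOcc ι k with hp
  -- basic facts about p
  have hne : {m | 1 ≤ m ∧ ι m = k}.Nonempty := by
    obtain ⟨m, hm1, hm2⟩ := hseq.2.2 k hk1 hkn 0
    exact ⟨m, hm1, hm2⟩
  have hpmem : 1 ≤ p ∧ ι p = k := Nat.sInf_mem hne
  have hp1 : 1 ≤ p := hpmem.1
  have hpk : ι p = k := hpmem.2
  have hpmin : ∀ m, 1 ≤ m → ι m = k → p ≤ m := fun m h1 h2 => Nat.sInf_le ⟨h1, h2⟩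
  have hfle : ∀ i m, 1 ≤ m → ι m = i → firstOcc ι i ≤ m := fun i m h1 h2 =>
    Nat.sInf_le ⟨h1, h2⟩
  -- Cartan vanishing before p
  have hC : ∀ j, 1 ≤ j → j < p → CartanA k (ι j) = 0 := by
    intro j hj1 hjp
    have hj := hseq.1 j hj1
    have hne1 : ι j ≠ k := fun h => absurd (hpmin j hj1 h) (by omega)
    have hne2 : ¬(k = ι j + 1) := by
      intro h
      exact hc2 ⟨by omega, by have := hfle (k - 1) j hj1 (by omega); omega⟩
    have hne3 : ¬(ι j = k + 1) := by
      intro h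
      exact hc1 ⟨by omega, by have := hfle (k + 1) j hj1 (by omega); omega⟩
    unfold CartanA
    rw [if_neg (fun h => hne1 h.symm), if_neg (by tauto)]
  -- the linear part of λ⁽ᵏ⁾
  have hf : ∀ j, (lamGenA ι lam k).2 j = if j = p then -1 else 0 := by
    intro j
    simp only [lamGenA, ← hp]
    rcases eq_or_ne j p with rfl | hj
    · simp
    · rw [if_neg hj]
      rcases Classical.em (1 ≤ j ∧ j < p) with h | h
      · rw [if_pos h, hC j h.1 h.2]; simp [hj]
      · rw [if_neg h]; simp [hj]
  have hkm0 : km p = 0 := by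
    rcases hkm p hp1 with h | ⟨h1, h2, h3, _⟩
    · exact h.1
    · exact absurd (hpmin (km p) h1 (h3.trans hpk)) (by omega)
  -- the pointwise statement
  have hS : ∀ m, 1 ≤ m →
      ShatAbs CartanA ι kp km lam m (lamGenA ι lam k) =
        if m = p then (((0 : ℚ), (0 : ℕ → ℚ)) : AffAbs) else lamGenA ι lam k := by
    intro m _
    rcases eq_or_ne m p with rfl | hm
    · rw [if_pos rfl]
      have hval : (lamGenA ι lam k).2 p = -1 := by rw [hf]; simp
      rw [ShatAbs, hval, if_neg (by norm_num), betaNegAbs, if_pos hkm0]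
      refine Prod.ext ?_ ?_
      · simp [lamGenA, hpk]
      · funext j
        simp only [Prod.snd_sub]
        show (lamGenA ι lam k).2 j - (-1 : ℚ) •
          ((if 1 ≤ j ∧ j < p then (CartanA (ι p) (ι j) : ℚ) else 0) +
            (if j = p then 1 else 0)) = 0
        rw [hpk]
        simp only [lamGenA, ← hp, neg_smul, one_smul, sub_neg_eq_add]
        ring
    · rw [if_neg hm]
      have hval : (lamGenA ι lam k).2 m = 0 := by rw [hf, if_neg hm]
      rw [ShatAbs, hval, if_neg (by norm_num), zero_smul, sub_zero]
  have hS0 : ∀ m, ShatAbs CartanA ι kp km lam m (((0 : ℚ), (0 : ℕ → ℚ)) : AffAbs) =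
      (((0 : ℚ), (0 : ℕ → ℚ)) : AffAbs) := by
    intro m
    rw [ShatAbs]
    norm_num
  refine ⟨hS, ?_⟩
  ext ψ
  constructor
  · rintro ⟨L, hL, rfl⟩
    induction L with
    | nil => exact Or.inr rfl
    | cons a L ih =>
      have ha : 1 ≤ a := hL a List.mem_cons_self
      have ih' := ih (fun m hm => hL m (List.mem_cons_of_mem a hm))
      simp only [List.foldr_cons]
      rcases ih' with h | h
      · rw [h, hS0]; exact Or.inl rfl
      · rw [Set.mem_singleton_iff] at h
        rw [h, hS a ha]
        rcases eq_or_ne a p with rfl | hne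
        · rw [if_pos rfl]; exact Or.inl rfl
        · rw [if_neg hne]; exact Or.inr rfl
  · rintro (h | h)
    · refine ⟨[p], by simpa using hp1, ?_⟩
      rw [h]
      simp only [List.foldr_cons, List.foldr_nil]
      rw [hS p hp1, if_pos rfl]
    · exact ⟨[], by simp, h⟩
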